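/- arXiv:2201.00110 — 2 statements merged into one kernel-verified Lean document; each statement's English description precedes it below -/
import Mathlib

section
/- Let f be a homeomorphism of a compact metric space X that is totally disconnected (equivalently, of topological dimension 0). If every point of X is positively recurrent for f and f is topologically transitive (some point has dense orbit), then f is minimal, i.e., every point of X has dense orbit. -/
open Filter Topology

/-- The `n`-th iterate (`n ∈ ℤ`) of a homeomorphism `f`, as a map `X → X`. -/
def iterZ {X : Type*} [TopologicalSpace X] (f : X ≃ₜ X) (n : ℤ) : X → X :=
  ⇑(f.toEquiv ^ n)

/-- The ω-limit set of `x`: limits of `f^{nᵢ}(x)` along strictly increasing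
sequences `0 < n₁ < n₂ < ⋯`. -/
def posLimitSet {X : Type*} [TopologicalSpace X] (f : X ≃ₜ X) (x : X) : Set X :=
  {y | ∃ n : ℕ → ℕ, StrictMono n ∧ 0 < n 0 ∧
    Tendsto (fun i => iterZ f (n i) x) atTop (𝓝 y)}

/-- The α-limit set of `x`: limits of `f^{-nᵢ}(x)` along strictly increasing
sequences `0 < n₁ < n₂ < ⋯`. -/
def negLimitSet {X : Type*} [TopologicalSpace X] (f : X ≃ₜ X) (x : X) : Set X :=
  {y | ∃ n : ℕ → ℕ, StrictMono n ∧ 0 < n 0 ∧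
    Tendsto (fun i => iterZ f (-(n i : ℤ)) x) atTop (𝓝 y)}

/-- `x` is recurrent if it is positively or negatively recurrent. -/
def RecurrentPt {X : Type*} [TopologicalSpace X] (f : X ≃ₜ X) (x : X) : Prop :=
  x ∈ posLimitSet f x ∨ x ∈ negLimitSet f x

/-- `f` is expansive with expansivity constant `c`. -/
def ExpansiveWith {X : Type*} [MetricSpace X] (f : X ≃ₜ X) (c : ℝ) : Prop :=
  0 < c ∧ ∀ x y : X, x ≠ y → ∃ n : ℤ, c < dist (iterZ f n x) (iterZ f n y)

/-- `f` is expansive. -/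
def Expansive {X : Type*} [MetricSpace X] (f : X ≃ₜ X) : Prop :=
  ∃ c : ℝ, ExpansiveWith f c

/-- The full orbit `{fⁿ(x) : n ∈ ℤ}` of a point. -/
def fullOrbit {X : Type*} [TopologicalSpace X] (f : X ≃ₜ X) (x : X) : Set X :=
  Set.range fun n : ℤ => iterZ f n x

/-- `E` is a minimal set: nonempty, closed, invariant (`f(E) = E`), with no proper
nonempty closed invariant subset. -/
def IsMinimalSet {X : Type*} [TopologicalSpace X] (f : X ≃ₜ X) (E : Set X) : Prop :=
  E.Nonempty ∧ IsClosed E ∧ f '' E = E ∧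
    ∀ E' ⊆ E, E'.Nonempty → IsClosed E' → f '' E' = E' → E' = E

/-- `x` is almost periodic: the closure of its orbit is a minimal set. -/
def AlmostPeriodicPt {X : Type*} [TopologicalSpace X] (f : X ≃ₜ X) (x : X) : Prop :=
  IsMinimalSet f (closure (fullOrbit f x))

/-- The left shift `σ` on `ℤ → F`, as a homeomorphism. -/
def shiftH (F : Type*) [TopologicalSpace F] : (ℤ → F) ≃ₜ (ℤ → F) where
  toFun x n := x (n + 1)
  invFun x n := x (n - 1)
  left_inv x := by funext n; simp
  right_inv x := by funext n; simp
  continuous_toFun := continuous_pi fun n => continuous_apply (n + 1)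
  continuous_invFun := continuous_pi fun n => continuous_apply (n - 1)

/-- The `n`-th power (`n ∈ ℕ`) of a homeomorphism, as a homeomorphism. -/
def hpow {X : Type*} [TopologicalSpace X] (f : X ≃ₜ X) : ℕ → X ≃ₜ X
  | 0 => Homeomorph.refl X
  | n + 1 => (hpow f n).trans f

/-- The local stable set `W^s_ε(x)`. -/
def localStable {X : Type*} [MetricSpace X] (f : X ≃ₜ X) (ε : ℝ) (x : X) : Set X :=
  {y | ∀ n : ℕ, dist (iterZ f n x) (iterZ f n y) ≤ ε}

/-- The local unstable set `W^u_ε(x)`. -/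
def localUnstable {X : Type*} [MetricSpace X] (f : X ≃ₜ X) (ε : ℝ) (x : X) : Set X :=
  {y | ∀ n : ℕ, dist (iterZ f (-(n : ℤ)) x) (iterZ f (-(n : ℤ)) y) ≤ ε}

/-- The stable set `W^s(x)`. -/
def stableSet {X : Type*} [MetricSpace X] (f : X ≃ₜ X) (x : X) : Set X :=
  {y | Tendsto (fun n : ℕ => dist (iterZ f n x) (iterZ f n y)) atTop (𝓝 0)}

/-- The unstable set `W^u(x)`. -/
def unstableSet {X : Type*} [MetricSpace X] (f : X ≃ₜ X) (x : X) : Set X :=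
  {y | Tendsto (fun n : ℕ => dist (iterZ f (-(n : ℤ)) x) (iterZ f (-(n : ℤ)) y)) atTop (𝓝 0)}

/-- `f` has the pseudo orbit tracing property. -/
def POTP {X : Type*} [MetricSpace X] (f : X ≃ₜ X) : Prop :=
  ∀ ε > (0 : ℝ), ∃ δ > (0 : ℝ), ∀ u : ℤ → X,
    (∀ i : ℤ, dist (f (u i)) (u (i + 1)) < δ) →
    ∃ x : X, ∀ i : ℤ, dist (iterZ f i x) (u i) < ε

section aux
variable {X : Type*} [TopologicalSpace X] (f : X ≃ₜ X)

lemma hpow_toEquiv (k : ℕ) : (hpow f k).toEquiv = f.toEquiv ^ k := by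
  induction k with
  | zero => rfl
  | succ n ih =>
    show ((hpow f n).trans f).toEquiv = _
    rw [pow_succ', ← ih]; rfl

lemma iterZ_eq_homeo (n : ℤ) : ∃ g : X ≃ₜ X, iterZ f n = ⇑g := by
  rcases n with m | m
  · refine ⟨hpow f m, ?_⟩
    simp only [iterZ, Int.ofNat_eq_coe, zpow_natCast, ← hpow_toEquiv]
    rfl
  · refine ⟨(hpow f (m+1)).symm, ?_⟩
    simp only [iterZ, zpow_negSucc, ← hpow_toEquiv]
    rfl

lemma iterZ_add (m n : ℤ) (x : X) : iterZ f (m + n) x = iterZ f m (iterZ f n x) := by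
  simp [iterZ, zpow_add, Equiv.Perm.mul_apply]

@[simp] lemma iterZ_zero (x : X) : iterZ f 0 x = x := by simp [iterZ]

@[simp] lemma iterZ_one (x : X) : iterZ f 1 x = f x := by simp [iterZ]

lemma iterZ_neg_one (x : X) : iterZ f (-1) x = f.symm x := by
  simp [iterZ]

end aux

section main
variable {X : Type*} [TopologicalSpace X] [CompactSpace X] (f : X ≃ₜ X)

omit [CompactSpace X] in
lemma exists_return {x : X} {U : Set X} (hU : IsOpen U) (hrec : x ∈ posLimitSet f x)
    (hx : x ∈ U) : ∃ k : ℕ, 1 ≤ k ∧ iterZ f (k : ℤ) x ∈ U := by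
  obtain ⟨n, hmono, hpos, htend⟩ := hrec
  have h := htend.eventually (hU.mem_nhds hx)
  obtain ⟨i, hi⟩ := h.exists
  exact ⟨n i, le_trans hpos (hmono.le_iff_le.2 (Nat.zero_le i)), hi⟩

lemma key (hrec : ∀ x : X, x ∈ posLimitSet f x) {x₀ : X} (hx₀ : Dense (fullOrbit f x₀))
    {U : Set X} (hU : IsClopen U) (hne : U.Nonempty) :
    ∀ y : X, ∃ n : ℤ, iterZ f n y ∈ U := by
  -- continuity of iterates and clopenness of images
  have hcont : ∀ n : ℤ, Continuous (iterZ f n) := by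
    intro n; obtain ⟨g, hg⟩ := iterZ_eq_homeo f n; rw [hg]; exact g.continuous
  have himg : ∀ (n : ℤ) (S : Set X), IsClopen S → IsClopen (iterZ f n '' S) := by
    intro n S hS
    obtain ⟨g, hg⟩ := iterZ_eq_homeo f n
    rw [hg]
    exact ⟨g.isClosedMap S hS.1, g.isOpenMap S hS.2⟩
  -- bounded return time on U
  have hcover : U ⊆ ⋃ k : ℕ, iterZ f ((k : ℤ) + 1) ⁻¹' U := by
    intro u hu
    obtain ⟨k, hk1, hkU⟩ := exists_return f hU.2 (hrec u) hu
    refine Set.mem_iUnion.2 ⟨k - 1, ?_⟩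
    have : ((k - 1 : ℕ) : ℤ) + 1 = (k : ℤ) := by omega
    simpa [this] using hkU
  obtain ⟨t, ht⟩ := (hU.1.isCompact).elim_finite_subcover
    (fun k : ℕ => iterZ f ((k : ℤ) + 1) ⁻¹' U) (fun k => hU.2.preimage (hcont _)) hcover
  set N : ℕ := (t.sup id) + 1 with hN
  have hret : ∀ u ∈ U, ∃ j : ℕ, 1 ≤ j ∧ j ≤ N ∧ iterZ f (j : ℤ) u ∈ U := by
    intro u hu
    obtain ⟨k, hk⟩ := Set.mem_iUnion.1 (ht hu)
    simp only [Set.mem_iUnion, exists_prop] at hk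
    obtain ⟨hkt, hku⟩ := hk
    refine ⟨k + 1, by omega, ?_, by push_cast; exact hku⟩
    have := Finset.le_sup (f := id) hkt
    simp only [id_eq] at this
    omega
  -- the clopen saturation W
  set W : Set X := ⋃ k ∈ Finset.range (N + 1), iterZ f (k : ℤ) '' U with hW
  have hWmem : ∀ w, w ∈ W ↔ ∃ k ≤ N, ∃ u ∈ U, iterZ f (k : ℤ) u = w := by
    intro w
    simp [hW, Set.mem_iUnion, Nat.lt_succ_iff]
  have hUW : U ⊆ W := by
    intro u hu
    exact (hWmem u).2 ⟨0, Nat.zero_le _, u, hu, by simp⟩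
  have hWclopen : IsClopen W := by
    apply Set.Finite.isClopen_biUnion (Finset.range (N+1)).finite_toSet
    intro k _; exact himg _ _ hU
  -- forward invariance
  have hfwd : ∀ w ∈ W, f w ∈ W := by
    intro w hw
    obtain ⟨k, hk, u, hu, rfl⟩ := (hWmem w).1 hw
    rcases lt_or_eq_of_le hk with h | h
    · refine (hWmem _).2 ⟨k + 1, by omega, u, hu, ?_⟩
      rw [show ((k + 1 : ℕ) : ℤ) = 1 + (k : ℤ) by push_cast; ring, iterZ_add, iterZ_one]
    · obtain ⟨j, hj1, hjN, hjU⟩ := hret u hu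
      refine (hWmem _).2 ⟨k + 1 - j, by omega, iterZ f (j : ℤ) u, hjU, ?_⟩
      rw [← iterZ_add, ← iterZ_one f (iterZ f k u), ← iterZ_add]
      congr 1
      omega
  have hfwd' : ∀ (m : ℕ) (w), w ∈ W → iterZ f (m : ℤ) w ∈ W := by
    intro m
    induction m with
    | zero => intro w hw; simpa using hw
    | succ m ih =>
      intro w hw
      rw [show ((m + 1 : ℕ) : ℤ) = 1 + m by push_cast; ring, iterZ_add, iterZ_one]
      exact hfwd _ (ih w hw)
  -- backward invariance via recurrence
  have hbwd : ∀ w ∈ W, f.symm w ∈ W := by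
    intro w hw
    have hWf : W ⊆ f '' W := by
      intro z hz
      obtain ⟨n, hmono, hpos, htend⟩ := hrec z
      have hclosed : IsClosed (f '' W) := f.isClosedMap W hWclopen.1
      refine hclosed.mem_of_tendsto htend (Eventually.of_forall fun i => ?_)
      have h1 : 1 ≤ n i := le_trans hpos (hmono.le_iff_le.2 (Nat.zero_le i))
      have : iterZ f (n i : ℤ) z = f (iterZ f ((n i - 1 : ℕ) : ℤ) z) := by
        rw [← iterZ_one f (iterZ f _ z), ← iterZ_add]
        congr 1
        omega
      rw [this]
      exact Set.mem_image_of_mem f (hfwd' _ z hz)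
    obtain ⟨v, hv, rfl⟩ := hWf hw
    simpa using hv
  have hinv : ∀ (n : ℤ) (w), w ∈ W → iterZ f n w ∈ W := by
    intro n
    induction n using Int.induction_on with
    | zero => intro w hw; simpa using hw
    | succ m ih =>
      intro w hw
      rw [show ((m : ℤ) + 1) = 1 + m by ring, iterZ_add, iterZ_one]
      exact hfwd _ (ih w hw)
    | pred m ih =>
      intro w hw
      rw [show (-(m : ℤ) - 1) = -1 + (-m) by ring, iterZ_add, iterZ_neg_one]
      exact hbwd _ (ih w hw)
  -- W = univ via the transitive point
  have hWuniv : W = Set.univ := by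
    have hWopen : IsOpen W := hWclopen.2
    obtain ⟨u0, hu0⟩ := hne
    obtain ⟨p, hp, hpW⟩ := hx₀.exists_mem_open hWopen ⟨u0, hUW hu0⟩
    obtain ⟨m, rfl⟩ := hp
    have horb : fullOrbit f x₀ ⊆ W := by
      rintro _ ⟨n, rfl⟩
      show iterZ f n x₀ ∈ W
      have : iterZ f n x₀ = iterZ f (n - m) (iterZ f m x₀) := by
        rw [← iterZ_add]; congr 1; ring
      rw [this]
      exact hinv _ _ hpW
    rw [← Set.univ_subset_iff]
    calc Set.univ ⊆ closure (fullOrbit f x₀) := by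
          rw [hx₀.closure_eq]
      _ ⊆ closure W := closure_mono horb
      _ = W := hWclopen.1.closure_eq
  -- conclude
  intro y
  have hy : y ∈ W := hWuniv ▸ Set.mem_univ y
  obtain ⟨k, _, u, hu, rfl⟩ := (hWmem y).1 hy
  refine ⟨-(k : ℤ), ?_⟩
  rw [← iterZ_add]
  simpa using hu

end main

/-- A pointwise positively recurrent, topologically transitive
homeomorphism of a totally disconnected compact metric space is minimal. -/
theorem stmt_7 {X : Type*} [MetricSpace X] [CompactSpace X] [TotallyDisconnectedSpace X]
    (f : X ≃ₜ X) (hrec : ∀ x : X, x ∈ posLimitSet f x)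
    (htrans : ∃ x : X, Dense (fullOrbit f x)) :
    ∀ x : X, Dense (fullOrbit f x) := by
  obtain ⟨x₀, hx₀⟩ := htrans
  intro y
  rw [dense_iff_inter_open]
  intro O hO hOne
  obtain ⟨z, hz⟩ := hOne
  obtain ⟨U, hUc, hzU, hUO⟩ := compact_exists_isClopen_in_isOpen hO hz
  obtain ⟨n, hn⟩ := key f hrec hx₀ hUc ⟨z, hzU⟩ y
  exact ⟨iterZ f n y, hUO hn, ⟨n, rfl⟩⟩
end

section
/- Let f be a homeomorphism of a compact metric space (X, d). If f is both distal and expansive, then X is finite. -/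
open Filter Topology

lemma continuous_perm_pow {X : Type*} [TopologicalSpace X] (e : Equiv.Perm X)
    (he : Continuous e) : ∀ k : ℕ, Continuous ⇑(e ^ k)
  | 0 => by simpa using continuous_id
  | k + 1 => by
      have h : ⇑(e ^ (k + 1)) = ⇑(e ^ k) ∘ ⇑e := by
        funext x; simp [pow_succ, Equiv.Perm.mul_apply]
      rw [h]; exact (continuous_perm_pow e he k).comp he

lemma continuous_iterZ {X : Type*} [TopologicalSpace X] (f : X ≃ₜ X) (n : ℤ) :
    Continuous (iterZ f n) := by
  cases n with
  | ofNat k =>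
      have h : iterZ f (Int.ofNat k) = ⇑(f.toEquiv ^ k) := by
        funext x; simp [iterZ, zpow_natCast]
      rw [h]; exact continuous_perm_pow _ f.continuous k
  | negSucc k =>
      have h : iterZ f (Int.negSucc k) = ⇑(f.symm.toEquiv ^ (k + 1)) := by
        funext x
        simp [iterZ, zpow_negSucc, ← inv_pow]
        rfl
      rw [h]; exact continuous_perm_pow _ f.symm.continuous (k + 1)

lemma iterZ_iterZ {X : Type*} [TopologicalSpace X] (f : X ≃ₜ X) (m n : ℤ) (x : X) :
    iterZ f m (iterZ f n x) = iterZ f (m + n) x := by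
  simp [iterZ, ← Equiv.Perm.mul_apply, ← zpow_add]

lemma exists_half_bounded {X : Type*} [MetricSpace X] [CompactSpace X] (f : X ≃ₜ X)
    (c : ℝ) (hc : (0:ℝ) < c) (s : ℤ) (x : X) (z : ℕ → X)
    (hzx : Tendsto z atTop (𝓝 x))
    (hN : ∀ j, ∃ N : ℕ, c < dist (iterZ f (s * N) x) (iterZ f (s * N) (z j))) :
    ∃ A B : X, c ≤ dist A B ∧
      ∀ t : ℤ, 1 ≤ t → dist (iterZ f (-(s * t)) A) (iterZ f (-(s * t)) B) ≤ c := by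
  classical
  set m : ℕ → ℕ := fun j => Nat.find (hN j) with hm
  have hm1 : ∀ j, c < dist (iterZ f (s * m j) x) (iterZ f (s * m j) (z j)) :=
    fun j => Nat.find_spec (hN j)
  have hm2 : ∀ j, ∀ t : ℕ, t < m j →
      dist (iterZ f (s * t) x) (iterZ f (s * t) (z j)) ≤ c :=
    fun j t ht => le_of_not_gt (Nat.find_min (hN j) ht)
  have hmtop : Tendsto m atTop atTop := by
    rw [tendsto_atTop]
    intro T
    have h1 : ∀ t : ℕ, ∀ᶠ j in atTop,
        dist (iterZ f (s * t) x) (iterZ f (s * t) (z j)) ≤ c := by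
      intro t
      have ht : Tendsto (fun j => dist (iterZ f (s * t) x) (iterZ f (s * t) (z j)))
          atTop (𝓝 0) := by
        have := (tendsto_const_nhds (x := iterZ f (s * t) x) (f := atTop (α := ℕ))).dist
          (((continuous_iterZ f (s * t)).tendsto x).comp hzx)
        simpa using this
      exact (ht.eventually (gt_mem_nhds hc)).mono fun j h => le_of_lt h
    have h2 : ∀ᶠ j in atTop, ∀ t ∈ Finset.range (T + 1),
        dist (iterZ f (s * t) x) (iterZ f (s * t) (z j)) ≤ c :=
      eventually_all_finset (Finset.range (T + 1)) |>.mpr fun t _ => h1 t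
    refine h2.mono fun j hj => ?_
    have : T < m j := by
      rw [hm, Nat.lt_find_iff]
      intro t ht
      exact not_lt.mpr (hj t (Finset.mem_range.mpr (Nat.lt_succ_of_le ht)))
    omega
  set p : ℕ → X × X := fun j => (iterZ f (s * m j) x, iterZ f (s * m j) (z j)) with hp
  obtain ⟨AB, φ, hφ, hlim⟩ := CompactSpace.tendsto_subseq p
  refine ⟨AB.1, AB.2, ?_, ?_⟩
  · have hdt : Tendsto (fun j => dist ((p ∘ φ) j).1 ((p ∘ φ) j).2) atTop
        (𝓝 (dist AB.1 AB.2)) := (continuous_dist.tendsto AB).comp hlim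
    exact ge_of_tendsto' hdt fun j => (hm1 (φ j)).le
  · intro t ht
    have hg : Continuous fun q : X × X =>
        dist (iterZ f (-(s * t)) q.1) (iterZ f (-(s * t)) q.2) :=
      ((continuous_iterZ f _).comp continuous_fst).dist
        ((continuous_iterZ f _).comp continuous_snd)
    have hdt : Tendsto (fun j => dist (iterZ f (-(s * t)) ((p ∘ φ) j).1)
        (iterZ f (-(s * t)) ((p ∘ φ) j).2)) atTop
        (𝓝 (dist (iterZ f (-(s * t)) AB.1) (iterZ f (-(s * t)) AB.2))) :=
      (hg.tendsto AB).comp hlim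
    refine le_of_tendsto hdt ?_
    have hev : ∀ᶠ j in atTop, t.toNat ≤ m (φ j) :=
      (hmtop.comp hφ.tendsto_atTop).eventually (eventually_ge_atTop t.toNat)
    refine hev.mono fun j hj => ?_
    have htm : t ≤ (m (φ j) : ℤ) := le_trans (Int.self_le_toNat t) (by exact_mod_cast hj)
    have hcalc : ∀ w : X, iterZ f (-(s * t)) (iterZ f (s * m (φ j)) w) =
        iterZ f (s * ((m (φ j) : ℤ) - t)) w := by
      intro w; rw [iterZ_iterZ]; ring_nf
    set t' : ℕ := ((m (φ j) : ℤ) - t).toNat with ht'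
    have htnn : (0 : ℤ) ≤ (m (φ j) : ℤ) - t := by omega
    have ht'' : ((t' : ℤ)) = (m (φ j) : ℤ) - t := Int.toNat_of_nonneg htnn
    have ht'lt : t' < m (φ j) := by omega
    have := hm2 (φ j) t' ht'lt
    simp only [Function.comp, hp] at *
    rw [hcalc, hcalc, ← ht'']
    exact this

lemma exists_fully_bounded {X : Type*} [MetricSpace X] [CompactSpace X] (f : X ≃ₜ X)
    (c c' : ℝ) (s : ℤ) (hs2 : s * s = 1) (A B : X)
    (hdd : ∀ n : ℤ, c' ≤ dist (iterZ f n A) (iterZ f n B))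
    (hbd : ∀ t : ℤ, 1 ≤ t → dist (iterZ f (-(s * t)) A) (iterZ f (-(s * t)) B) ≤ c) :
    ∃ A' B' : X, c' ≤ dist A' B' ∧
      ∀ n : ℤ, dist (iterZ f n A') (iterZ f n B') ≤ c := by
  set q : ℕ → X × X := fun i =>
    (iterZ f (-(s * ((i : ℤ) + 1))) A, iterZ f (-(s * ((i : ℤ) + 1))) B) with hq
  obtain ⟨P, ψ, hψ, hlim⟩ := CompactSpace.tendsto_subseq q
  refine ⟨P.1, P.2, ?_, ?_⟩
  · have hdt : Tendsto (fun i => dist ((q ∘ ψ) i).1 ((q ∘ ψ) i).2) atTop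
        (𝓝 (dist P.1 P.2)) := (continuous_dist.tendsto P).comp hlim
    exact ge_of_tendsto' hdt fun i => hdd _
  · intro n
    have hg : Continuous fun r : X × X =>
        dist (iterZ f n r.1) (iterZ f n r.2) :=
      ((continuous_iterZ f _).comp continuous_fst).dist
        ((continuous_iterZ f _).comp continuous_snd)
    have hdt : Tendsto (fun i => dist (iterZ f n ((q ∘ ψ) i).1)
        (iterZ f n ((q ∘ ψ) i).2)) atTop
        (𝓝 (dist (iterZ f n P.1) (iterZ f n P.2))) := (hg.tendsto P).comp hlim
    refine le_of_tendsto hdt ?_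
    have hev : ∀ᶠ i in atTop, (s * n).toNat ≤ ψ i :=
      hψ.tendsto_atTop.eventually (eventually_ge_atTop _)
    refine hev.mono fun i hi => ?_
    simp only [Function.comp, hq]
    rw [iterZ_iterZ, iterZ_iterZ]
    have hsn : s * n ≤ (ψ i : ℤ) := le_trans (Int.self_le_toNat _) (by exact_mod_cast hi)
    have h1 : (1 : ℤ) ≤ (ψ i : ℤ) + 1 - s * n := by omega
    have heq : n + -(s * ((ψ i : ℤ) + 1)) = -(s * ((ψ i : ℤ) + 1 - s * n)) := by
      have : s * (s * n) = n := by
        calc s * (s * n) = (s * s) * n := by ring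
        _ = n := by rw [hs2]; ring
      nlinarith [this]
    rw [heq]
    exact hbd _ h1

theorem stmt_14' {X : Type*} [MetricSpace X] [CompactSpace X] (f : X ≃ₜ X)
    (hdis : ∀ x y : X, x ≠ y → ∃ c > (0 : ℝ), ∀ n : ℤ, c ≤ dist (iterZ f n x) (iterZ f n y))
    (hexp : ∃ c : ℝ, 0 < c ∧ ∀ x y : X, x ≠ y → ∃ n : ℤ, c < dist (iterZ f n x) (iterZ f n y)) :
    Finite X := by
  classical
  obtain ⟨c, hc, hce⟩ := hexp
  by_contra hfin
  -- there is a non-isolated point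
  have hnd : ∃ x : X, ¬ IsOpen ({x} : Set X) := by
    by_contra h
    push_neg at h
    have : DiscreteTopology X := discreteTopology_iff_isOpen_singleton.mpr h
    exact hfin finite_of_compact_of_discrete
  obtain ⟨x, hx⟩ := hnd
  have hxcl : x ∈ closure ({x}ᶜ : Set X) := by
    by_contra hmem
    apply hx
    have hcl : closure ({x}ᶜ : Set X) = {x}ᶜ := by
      refine Set.Subset.antisymm ?_ subset_closure
      intro y hy
      rcases eq_or_ne y x with rfl | h
      · exact absurd hy hmem
      · exact h
    have hclosed : IsClosed ({x}ᶜ : Set X) := closure_eq_iff_isClosed.mp hcl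
    simpa using hclosed.isOpen_compl
  obtain ⟨y, hy, hyx⟩ := mem_closure_iff_seq_limit.mp hxcl
  have hxy : ∀ k, x ≠ y k := fun k h => hy k (by simp [← h])
  have hn : ∀ k, ∃ n : ℤ, c < dist (iterZ f n x) (iterZ f n (y k)) :=
    fun k => hce x (y k) (hxy k)
  choose n hnd' using hn
  -- pigeonhole on sign
  have hsign : ∃ s : ℤ, (s = 1 ∨ s = -1) ∧ {k | ∃ N : ℕ, n k = s * N}.Infinite := by
    by_contra h
    push_neg at h
    have h1 : {k | ∃ N : ℕ, n k = 1 * N}.Finite :=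
      h 1 (Or.inl rfl)
    have h2 : {k | ∃ N : ℕ, n k = (-1) * N}.Finite :=
      h (-1) (Or.inr rfl)
    have hcov : (Set.univ : Set ℕ) ⊆
        {k | ∃ N : ℕ, n k = 1 * N} ∪ {k | ∃ N : ℕ, n k = (-1) * N} := by
      intro k _
      rcases le_or_gt 0 (n k) with h0 | h0
      · exact Or.inl ⟨(n k).toNat, by simp [Int.toNat_of_nonneg h0]⟩
      · refine Or.inr ⟨(-(n k)).toNat, ?_⟩
        have hh : (0 : ℤ) ≤ -n k := by omega
        rw [Int.toNat_of_nonneg hh]; ring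
    exact Set.infinite_univ ((h1.union h2).subset hcov)
  obtain ⟨s, hs, hinf⟩ := hsign
  have hs2 : s * s = 1 := by rcases hs with rfl | rfl <;> norm_num
  haveI : Infinite {k | ∃ N : ℕ, n k = s * N} := Set.infinite_coe_iff.mpr hinf
  set φ := Nat.orderEmbeddingOfSet {k | ∃ N : ℕ, n k = s * N} with hφdef
  have hφmem : ∀ j, φ j ∈ {k | ∃ N : ℕ, n k = s * N} := by
    intro j
    have : φ j ∈ Set.range ⇑φ := Set.mem_range_self j
    rwa [Nat.orderEmbeddingOfSet_range] at this
  have hφmono : StrictMono φ := φ.strictMono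
  -- apply the first limit lemma
  have hzx : Tendsto (fun j => y (φ j)) atTop (𝓝 x) :=
    hyx.comp hφmono.tendsto_atTop
  have hN : ∀ j, ∃ N : ℕ,
      c < dist (iterZ f (s * N) x) (iterZ f (s * N) (y (φ j))) := by
    intro j
    obtain ⟨N, hNeq⟩ := hφmem j
    exact ⟨N, by rw [← hNeq]; exact hnd' (φ j)⟩
  obtain ⟨A, B, hAB, hbd⟩ :=
    exists_half_bounded f c hc s x (fun j => y (φ j)) hzx hN
  have hABne : A ≠ B := by
    intro h; rw [h, dist_self] at hAB; linarith
  obtain ⟨c', hc', hdd⟩ := hdis A B hABne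
  obtain ⟨A', B', hAB', hbd'⟩ :=
    exists_fully_bounded f c c' s hs2 A B hdd hbd
  have hA'B'ne : A' ≠ B' := by
    intro h; rw [h, dist_self] at hAB'; linarith
  obtain ⟨nn, hnn⟩ := hce A' B' hA'B'ne
  exact absurd (hbd' nn) (not_le.mpr hnn)

/-- A distal expansive homeomorphism of a compact metric space has
finite phase space. -/
theorem stmt_14 {X : Type*} [MetricSpace X] [CompactSpace X] (f : X ≃ₜ X)
    (hdis : ∀ x y : X, x ≠ y → ∃ c > (0 : ℝ), ∀ n : ℤ, c ≤ dist (iterZ f n x) (iterZ f n y))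
    (hexp : Expansive f) :
    Finite X := by
  obtain ⟨c, hc, hce⟩ := hexp
  exact stmt_14' f hdis ⟨c, hc, hce⟩
end
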